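/- Let m, n, d be natural numbers with 0 < d < min(m,n) and c = m+n-2d-1. The d×(d+1) matrix H with entries C(c, m-i-j) for 1 ≤ i ≤ d, 0 ≤ j ≤ d has rank d over ℚ, and its kernel is one-dimensional, spanned by the vector (q_0, -q_1, ..., (-1)^d q_d), where q_j is the determinant of the submatrix of H obtained by deleting the (j+1)-th column. -/

import Mathlib

open Finset Matrix

/-- Binomial coefficient `C(c, k)` with integer lower index, zero when `k < 0`
(and automatically zero when `k > c`). -/
def binomZ (c : ℕ) (k : ℤ) : ℤ := if 0 ≤ k then (c.choose k.toNat : ℤ) else 0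

/-- The `d × (d+1)` binomial Hankel matrix `H(m,n,d)` with entries
`C(m+n-2d-1, m-i-j)` for `1 ≤ i ≤ d`, `0 ≤ j ≤ d`. -/
def hankelH (m n d : ℕ) : Matrix (Fin d) (Fin (d + 1)) ℤ :=
  Matrix.of fun i j => binomZ (m + n - 2 * d - 1) ((m : ℤ) - ((i : ℕ) + 1) - (j : ℕ))

/-- `q_j(m,n,d)`: the maximal minor of `H(m,n,d)` obtained by deleting the
`(j+1)`-th column (columns are indexed `0,…,d`). -/
def qMinor (m n d : ℕ) (j : Fin (d + 1)) : ℤ :=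
  ((hankelH m n d).submatrix id j.succAbove).det

open Polynomial in
/-- A nonzero polynomial has root multiplicity at a nonzero point strictly less than
its number of nonzero coefficients. -/
lemma multLtAux : ∀ (N : ℕ) (F : ℚ[X]), F.natDegree ≤ N → F ≠ 0 → ∀ r : ℚ, r ≠ 0 →
    F.rootMultiplicity r < F.support.card := by
  intro N
  induction N with
  | zero =>
    intro F hdeg F0 r hr
    have hc : F = C (F.coeff 0) := eq_C_of_natDegree_eq_zero (Nat.le_zero.mp hdeg)
    have : ¬ F.IsRoot r := by
      intro h
      apply F0
      have h0 : F.coeff 0 = 0 := by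
        have := h
        rw [IsRoot, hc] at this
        simpa using this
      rw [hc, h0, map_zero]
    rw [rootMultiplicity_eq_zero this]
    exact Finset.card_pos.mpr (nonempty_support_iff.mpr F0)
  | succ N ih =>
    intro F hdeg F0 r hr
    by_cases hroot : F.IsRoot r
    · by_cases h0 : F.coeff 0 = 0
      · -- strip a factor of X
        have hFe : F.divX * X = F := by
          have := F.divX_mul_X_add
          rw [h0] at this
          simpa using this
        have hdvx : F.divX ≠ 0 := fun h => F0 (by rw [← hFe, h, zero_mul])
        have hXr : rootMultiplicity r (X : ℚ[X]) = 0 := by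
          rw [rootMultiplicity_eq_zero]
          simpa [IsRoot] using hr
        have hmult : F.rootMultiplicity r = F.divX.rootMultiplicity r := by
          conv_lhs => rw [← hFe]
          rw [rootMultiplicity_mul (by rw [hFe]; exact F0), hXr, add_zero]
        have hsupp : F.support = F.divX.support.image (· + 1) := by
          ext k
          cases k with
          | zero => simp [h0]
          | succ j =>
            simp only [mem_support_iff, Finset.mem_image]
            constructor
            · intro h
              exact ⟨j, by rwa [coeff_divX], rfl⟩
            · rintro ⟨i, hi, hij⟩
              have : i = j := by omega
              subst this
              rwa [coeff_divX] at hi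
        have hcard : F.support.card = F.divX.support.card := by
          rw [hsupp, Finset.card_image_of_injective _ (add_left_injective 1)]
        rw [hmult, hcard]
        exact ih F.divX (by
          have := natDegree_divX_eq_natDegree_tsub_one (p := F)
          omega) hdvx r hr
      · -- use the derivative
        have hdF : F.natDegree ≠ 0 := by
          intro h
          have hc : F = C (F.coeff 0) := eq_C_of_natDegree_eq_zero h
          rw [IsRoot, hc] at hroot
          simp at hroot
          exact h0 hroot
        have hD0 : derivative F ≠ 0 := fun h => hdF (natDegree_eq_zero_of_derivative_eq_zero h)
        have hmul : (derivative F).rootMultiplicity r = F.rootMultiplicity r - 1 :=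
          derivative_rootMultiplicity_of_root hroot
        have hpos : 0 < F.rootMultiplicity r := (rootMultiplicity_pos F0).mpr hroot
        have hsub : (derivative F).support ⊆ (F.support.erase 0).image (· - 1) := by
          intro k hk
          rw [mem_support_iff, coeff_derivative] at hk
          have : F.coeff (k + 1) ≠ 0 := fun h => hk (by rw [h, zero_mul])
          refine Finset.mem_image.mpr ⟨k + 1, ?_, by omega⟩
          exact Finset.mem_erase.mpr ⟨by omega, mem_support_iff.mpr this⟩
        have h0mem : (0 : ℕ) ∈ F.support := mem_support_iff.mpr h0
        have hcard : (derivative F).support.card < F.support.card := by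
          calc (derivative F).support.card ≤ ((F.support.erase 0).image (· - 1)).card :=
                Finset.card_le_card hsub
            _ ≤ (F.support.erase 0).card := Finset.card_image_le
            _ < F.support.card := Finset.card_erase_lt_of_mem h0mem
        have := ih (derivative F) (by have := natDegree_derivative_lt hdF; omega) hD0 r hr
        omega
    · rw [rootMultiplicity_eq_zero hroot]
      exact Finset.card_pos.mpr (nonempty_support_iff.mpr F0)

open Polynomial in
lemma multLt (F : ℚ[X]) (F0 : F ≠ 0) {r : ℚ} (hr : r ≠ 0) :
    F.rootMultiplicity r < F.support.card :=
  multLtAux F.natDegree F F.natDegree.le_refl F0 r hr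

lemma binomZ_cast (c k p : ℕ) :
    ((binomZ c ((k : ℤ) - p) : ℤ) : ℚ) = if p ≤ k then ((c.choose (k - p)) : ℚ) else 0 := by
  unfold binomZ
  by_cases h : p ≤ k
  · rw [if_pos (by omega : (0:ℤ) ≤ (k:ℤ) - p), if_pos h]
    have ht : ((k:ℤ) - p).toNat = k - p := by omega
    rw [ht]
    push_cast
    ring
  · rw [if_neg (by omega : ¬ (0:ℤ) ≤ (k:ℤ) - p), if_neg h, Int.cast_zero]

open Polynomial in
/-- Triviality of the left kernel of the (substituted) Hankel matrix. -/
lemma leftKer (d a b : ℕ) (lam : Fin d → ℚ)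
    (h : ∀ j : Fin (d+1), ∑ i : Fin d,
      ((binomZ (a+b+1) (((d+1+a : ℕ) : ℤ) - ((i:ℕ)+1) - (j:ℕ)) : ℤ) : ℚ) * lam i = 0) :
    lam = 0 := by
  by_contra hlam
  obtain ⟨i0, hi0⟩ := Function.ne_iff.mp hlam
  set c := a + b + 1 with hc
  set L : ℚ[X] := ∑ i : Fin d, Polynomial.C (lam i) * Polynomial.X ^ ((i:ℕ)+1) with hLdef
  set F : ℚ[X] := (1 + Polynomial.X) ^ c * L with hFdef
  -- the coefficient formula
  have hcoeff : ∀ k, F.coeff k = ∑ i : Fin d, lam i *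
      (if (i:ℕ)+1 ≤ k then ((c.choose (k - ((i:ℕ)+1))) : ℚ) else 0) := by
    intro k
    rw [hFdef, hLdef, Finset.mul_sum, finset_sum_coeff]
    refine Finset.sum_congr rfl fun i _ => ?_
    rw [show (1 + Polynomial.X) ^ c * (Polynomial.C (lam i) * Polynomial.X ^ ((i:ℕ)+1))
        = (Polynomial.C (lam i) * (1 + Polynomial.X) ^ c) * Polynomial.X ^ ((i:ℕ)+1) by ring,
      coeff_mul_X_pow']
    split_ifs with hik
    · rw [coeff_C_mul, coeff_one_add_X_pow]
    · rw [mul_zero]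
  -- L is nonzero
  have hL0 : L ≠ 0 := by
    intro h0
    apply hi0
    have : L.coeff ((i0:ℕ)+1) = lam i0 := by
      rw [hLdef, finset_sum_coeff]
      have : ∀ i : Fin d, (Polynomial.C (lam i) * Polynomial.X ^ ((i:ℕ)+1)).coeff ((i0:ℕ)+1)
          = if i = i0 then lam i else 0 := by
        intro i
        rw [coeff_C_mul, Polynomial.coeff_X_pow]
        by_cases hii : i = i0
        · subst hii; simp
        · have hne : ¬ ((i:ℕ)+1 = (i0:ℕ)+1) ∧ ¬ ((i0:ℕ)+1 = (i:ℕ)+1) := by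
            constructor <;> exact fun hco => hii (Fin.ext (by omega))
          rw [if_neg hne.2, if_neg hii, mul_zero]
      rw [Finset.sum_congr rfl fun i _ => this i]
      simp
    simp only [Pi.zero_apply]
    rw [← this, h0, Polynomial.coeff_zero]
  have hF0 : F ≠ 0 := by
    refine mul_ne_zero (pow_ne_zero _ ?_) hL0
    intro h1
    have := congrArg (fun p => Polynomial.coeff p 0) h1
    simp at this
  -- the coefficients in the window vanish
  have hwin : ∀ k, a + 1 ≤ k → k ≤ a + d + 1 → F.coeff k = 0 := by
    intro k hk1 hk2
    have hj : d + 1 + a - k < d + 1 := by omega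
    have hh := h ⟨d + 1 + a - k, hj⟩
    rw [hcoeff k]
    refine Eq.trans (Finset.sum_congr rfl fun i _ => ?_) hh
    have harg : ((d+1+a : ℕ) : ℤ) - ((i:ℕ)+1) - (((⟨d + 1 + a - k, hj⟩ : Fin (d+1)) : ℕ) : ℤ)
        = (k : ℤ) - (((i:ℕ)+1 : ℕ) : ℤ) := by
      simp only [Fin.val_mk]
      push_cast
      omega
    rw [harg, binomZ_cast]
    exact mul_comm _ _
  -- support bound
  have hsupp : F.support ⊆ Finset.Ico 1 (a+1) ∪ Finset.Icc (a+d+2) (a+b+d+1) := by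
    intro k hk
    rw [Polynomial.mem_support_iff] at hk
    by_contra hmem
    apply hk
    simp only [Finset.mem_union, Finset.mem_Ico, Finset.mem_Icc, not_or, not_and_or, not_le,
      not_lt] at hmem
    by_cases hk0 : k = 0
    · subst hk0
      rw [hcoeff]
      refine Finset.sum_eq_zero fun i _ => ?_
      rw [if_neg (by omega), mul_zero]
    by_cases hkw : a + 1 ≤ k ∧ k ≤ a + d + 1
    · exact hwin k hkw.1 hkw.2
    · -- then k ≥ a + b + d + 2
      have hklarge : a + b + d + 2 ≤ k := by omega
      rw [hcoeff]
      refine Finset.sum_eq_zero fun i _ => ?_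
      have hi : (i:ℕ) < d := i.isLt
      rw [if_pos (by omega), Nat.choose_eq_zero_of_lt (by omega), Nat.cast_zero, mul_zero]
  have hcardS : (Finset.Ico 1 (a+1) ∪ Finset.Icc (a+d+2) (a+b+d+1)).card ≤ a + b := by
    calc (Finset.Ico 1 (a+1) ∪ Finset.Icc (a+d+2) (a+b+d+1)).card
        ≤ (Finset.Ico 1 (a+1)).card + (Finset.Icc (a+d+2) (a+b+d+1)).card :=
          Finset.card_union_le _ _
      _ ≤ a + b := by rw [Nat.card_Ico, Nat.card_Icc]; omega
  have hcard : F.support.card ≤ a + b := le_trans (Finset.card_le_card hsupp) hcardS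
  -- root multiplicity at -1 is at least c
  have hdvd : (Polynomial.X - Polynomial.C (-1 : ℚ)) ^ c ∣ F := by
    rw [show Polynomial.X - Polynomial.C (-1 : ℚ) = 1 + Polynomial.X by
      rw [show Polynomial.C (-1 : ℚ) = -1 by simp]; ring]
    exact Dvd.intro L rfl
  have hmge : c ≤ F.rootMultiplicity (-1 : ℚ) := (le_rootMultiplicity_iff hF0).mpr hdvd
  have hmlt : F.rootMultiplicity (-1 : ℚ) < F.support.card :=
    multLt F hF0 (by norm_num)
  omega

/-- The binomial Hankel matrix `H(m,n,d)` has full rank `d` over `ℚ`, and its kernel is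
one-dimensional, spanned by the vector of signed maximal minors `((-1)^j q_j)_j`. -/
theorem hankel_rank_and_kernel (m n d : ℕ) (hd : 0 < d) (hdm : d < m) (hdn : d < n) :
    ((hankelH m n d).map (Int.cast : ℤ → ℚ)).rank = d ∧
      ∀ v : Fin (d + 1) → ℚ,
        ((hankelH m n d).map (Int.cast : ℤ → ℚ)).mulVec v = 0 ↔
          ∃ t : ℚ, v = t • fun j : Fin (d + 1) =>
            (-1 : ℚ) ^ (j : ℕ) * ((qMinor m n d j : ℤ) : ℚ) := by
  classical
  obtain ⟨a, rfl⟩ : ∃ a, m = d + 1 + a := ⟨m - (d+1), by omega⟩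
  obtain ⟨b, rfl⟩ : ∃ b, n = d + 1 + b := ⟨n - (d+1), by omega⟩
  set A : Matrix (Fin d) (Fin (d+1)) ℚ :=
    (hankelH (d+1+a) (d+1+b) d).map (Int.cast : ℤ → ℚ) with hA
  have hcc : (d+1+a) + (d+1+b) - 2*d - 1 = a + b + 1 := by omega
  have hAentry : ∀ i j, A i j =
      ((binomZ (a+b+1) (((d+1+a : ℕ) : ℤ) - ((i:ℕ)+1) - (j:ℕ)) : ℤ) : ℚ) := by
    intro i j
    rw [hA]
    simp [hankelH, Matrix.map_apply, hcc]
  -- left kernel is trivial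
  have hker : ∀ lam : Fin d → ℚ, Aᵀ.mulVec lam = 0 → lam = 0 := by
    intro lam hl
    apply leftKer d a b lam
    intro j
    have := congrFun hl j
    rw [Matrix.mulVec] at this
    simp only [dotProduct, Matrix.transpose_apply, Pi.zero_apply] at this
    rw [← this]
    exact Finset.sum_congr rfl fun i _ => by rw [hAentry]
  -- rank
  have hrankT : Aᵀ.rank = d := by
    have h1 : LinearMap.ker (Aᵀ.mulVecLin) = ⊥ := by
      rw [LinearMap.ker_eq_bot']
      intro lam hl
      exact hker lam (by rwa [Matrix.mulVecLin_apply] at hl)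
    have h2 := LinearMap.finrank_range_add_finrank_ker (Aᵀ.mulVecLin)
    rw [h1, finrank_bot, add_zero] at h2
    rw [Matrix.rank, h2, Module.finrank_fin_fun]
  have hrank : A.rank = d := by rw [← Matrix.rank_transpose]; exact hrankT
  -- kernel dimension is 1
  have hkerdim : Module.finrank ℚ (LinearMap.ker A.mulVecLin) = 1 := by
    have h2 := LinearMap.finrank_range_add_finrank_ker (A.mulVecLin)
    rw [Module.finrank_fin_fun] at h2
    have : Module.finrank ℚ ↥(LinearMap.range A.mulVecLin) = d := hrank
    omega
  -- the signed-minor vector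
  set w : Fin (d+1) → ℚ :=
    fun j => (-1 : ℚ) ^ (j : ℕ) * ((qMinor (d+1+a) (d+1+b) d j : ℤ) : ℚ) with hw
  -- cast of minors
  have hqcast : ∀ j : Fin (d+1),
      ((qMinor (d+1+a) (d+1+b) d j : ℤ) : ℚ) = (A.submatrix id j.succAbove).det := by
    intro j
    have h1 : A.submatrix id j.succAbove
        = ((hankelH (d+1+a) (d+1+b) d).submatrix id j.succAbove).map
            (⇑(Int.castRingHom ℚ)) := by
      ext i k
      simp [hA, Matrix.map_apply]
    rw [qMinor, h1]
    exact RingHom.map_det (Int.castRingHom ℚ) _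
  -- w is in the kernel (Laplace expansion)
  have hwker : A.mulVec w = 0 := by
    funext i
    set B : Matrix (Fin (d+1)) (Fin (d+1)) ℚ := Matrix.of (Fin.cons (A i) A) with hB
    have hBdet : B.det = 0 := by
      refine Matrix.det_zero_of_row_eq (i := 0) (j := i.succ) (Fin.succ_ne_zero i).symm ?_
      funext j
      show Matrix.of (Fin.cons (A i) A) 0 j = Matrix.of (Fin.cons (A i) A) i.succ j
      rfl
    have hexp := Matrix.det_succ_row_zero B
    have hsubm : ∀ j : Fin (d+1), B.submatrix Fin.succ j.succAbove = A.submatrix id j.succAbove := by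
      intro j
      ext r s
      show Matrix.of (Fin.cons (A i) A) r.succ (j.succAbove s) = A r (j.succAbove s)
      rfl
    have : A.mulVec w i = B.det := by
      rw [hexp, Matrix.mulVec]
      refine Finset.sum_congr rfl fun j _ => ?_
      rw [hsubm j, hw]
      show A i j * ((-1:ℚ)^(j:ℕ) * ((qMinor (d+1+a) (d+1+b) d j : ℤ) : ℚ)) = _
      rw [hqcast j]
      have hB0j : B 0 j = A i j := by
        show Matrix.of (Fin.cons (A i) A) 0 j = A i j
        rfl
      rw [hB0j]
      ring
    rw [Pi.zero_apply, this, hBdet]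
  -- w is nonzero
  have hwne : w ≠ 0 := by
    have hkb : LinearMap.ker A.mulVecLin ≠ ⊥ := by
      intro hb
      rw [hb] at hkerdim
      simp at hkerdim
    obtain ⟨u, huker, hu0⟩ := (Submodule.ne_bot_iff _).mp hkb
    obtain ⟨j0, hj0⟩ := Function.ne_iff.mp hu0
    have hspan : Submodule.span ℚ {u} = LinearMap.ker A.mulVecLin := by
      apply Submodule.eq_of_le_of_finrank_le
      · rw [Submodule.span_le, Set.singleton_subset_iff]; exact huker
      · rw [hkerdim, finrank_span_singleton hu0]
    set S : Matrix (Fin d) (Fin d) ℚ := A.submatrix id j0.succAbove with hS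
    have hSdet : S.det ≠ 0 := by
      intro hdet
      obtain ⟨x, hx0, hxS⟩ := (Matrix.exists_mulVec_eq_zero_iff).mpr hdet
      set xh : Fin (d+1) → ℚ := Fin.insertNth j0 0 x with hxh
      have hxhker : A.mulVec xh = 0 := by
        funext i
        have : A.mulVec xh i = S.mulVec x i := by
          rw [Matrix.mulVec, Matrix.mulVec]
          show (dotProduct (A i) xh) = _
          rw [dotProduct, Fin.sum_univ_succAbove _ j0]
          have h1 : xh j0 = 0 := by
            rw [hxh, Fin.insertNth_apply_same]
          have h2 : ∀ t : Fin d, xh (j0.succAbove t) = x t := fun t => by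
            rw [hxh, Fin.insertNth_apply_succAbove]
          rw [h1, mul_zero, zero_add]
          exact Finset.sum_congr rfl fun t _ => by rw [h2 t]; rfl
        rw [this, hxS, Pi.zero_apply]
      have hmem : xh ∈ Submodule.span ℚ {u} := by
        rw [hspan]
        exact LinearMap.mem_ker.mpr (by rwa [Matrix.mulVecLin_apply])
      obtain ⟨t, ht⟩ := Submodule.mem_span_singleton.mp hmem
      have ht0 : t = 0 := by
        have hco := congrFun ht j0
        rw [Pi.smul_apply, smul_eq_mul, hxh, Fin.insertNth_apply_same] at hco
        rcases mul_eq_zero.mp hco with h | h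
        · exact h
        · exact absurd h hj0
      apply hx0
      funext i
      have hco := congrFun ht (j0.succAbove i)
      rw [ht0, hxh, Fin.insertNth_apply_succAbove] at hco
      simpa using hco.symm
    intro hw0
    apply hSdet
    have := congrFun hw0 j0
    rw [hw, Pi.zero_apply] at this
    have h1 : ((qMinor (d+1+a) (d+1+b) d j0 : ℤ) : ℚ) = 0 := by
      rcases mul_eq_zero.mp this with h | h
      · exact absurd h (by positivity)
      · exact h
    rw [← hqcast j0]
    exact h1
  -- kernel equals the span of w
  have hspanw : Submodule.span ℚ {w} = LinearMap.ker A.mulVecLin := by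
    apply Submodule.eq_of_le_of_finrank_le
    · rw [Submodule.span_le, Set.singleton_subset_iff]
      exact LinearMap.mem_ker.mpr (by rwa [Matrix.mulVecLin_apply])
    · rw [hkerdim, finrank_span_singleton hwne]
  constructor
  · exact hrank
  · intro v
    constructor
    · intro hv
      have : v ∈ Submodule.span ℚ {w} := by
        rw [hspanw]
        exact LinearMap.mem_ker.mpr (by rwa [Matrix.mulVecLin_apply])
      obtain ⟨t, ht⟩ := Submodule.mem_span_singleton.mp this
      exact ⟨t, ht.symm⟩
    · rintro ⟨t, rfl⟩
      have : A.mulVec (t • w) = t • A.mulVec w := by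
        rw [Matrix.mulVec_smul]
      rw [this, hwker, smul_zero]
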